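/- Let X be a nonempty finite type and let L = Fin C with C ≥ 1. Let p : Fin C → ℝ be a probability vector with p_s > 0 for all s, and for each s let z_s : X → ℝ be a probability mass function on X. Consider the joint distribution P(s, x) = p_s z_s(x) on Fin C × X, with marginal m(x) = Σ_s p_s z_s(x). Then the mutual information MI = Σ_{s,x} p_s z_s(x) ln( z_s(x) / m(x) ) (with the convention 0·ln 0 = 0) satisfies MI ≥ −Σ_{s=1}^{C} p_s ln( Σ_{r=1}^{C} p_r BC(z_s, z_r) ), where BC(z_s, z_r) = Σ_{x ∈ X} √(z_s(x) z_r(x)) is the Bhattacharyya coefficient. -/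

import Mathlib

open scoped BigOperators

/-- Mutual-information form of Lemma 1: the mutual information of the joint distribution
`P(s, x) = p s * z s x` is bounded below via pairwise Bhattacharyya coefficients. -/
theorem mutual_information_lower_bound
    {X : Type*} [Fintype X] [Nonempty X]
    (C : ℕ) (hC : 1 ≤ C)
    (p : Fin C → ℝ) (hp_pos : ∀ s, 0 < p s) (hp_sum : ∑ s, p s = 1)
    (z : Fin C → X → ℝ) (hz_nonneg : ∀ s x, 0 ≤ z s x) (hz_sum : ∀ s, ∑ x, z s x = 1)
    -- the mixture marginal
    (m : X → ℝ) (hm : ∀ x, m x = ∑ s, p s * z s x)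
    -- the mutual information of the joint distribution `P(s, x) = p s * z s x`
    (MI : ℝ)
    (hMI : MI = ∑ s, ∑ x, p s * z s x * Real.log (z s x / m x)) :
    MI ≥ -∑ s, p s * Real.log (∑ r, p r * ∑ x, Real.sqrt (z s x * z r x)) := by
  classical
  set q : X → ℝ := fun x => ∑ r, p r * Real.sqrt (z r x) with hq_def
  set T : Fin C → ℝ := fun s => ∑ x, Real.sqrt (z s x) * q x with hT_def
  have hp_nonneg : ∀ s, 0 ≤ p s := fun s => (hp_pos s).le
  have hm_nonneg : ∀ x, 0 ≤ m x := fun x => by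
    rw [hm]
    exact Finset.sum_nonneg fun s _ => mul_nonneg (hp_nonneg s) (hz_nonneg s x)
  have hz_le_one : ∀ s x, z s x ≤ 1 := by
    intro s x
    calc z s x ≤ ∑ y, z s y :=
          Finset.single_le_sum (fun y _ => hz_nonneg s y) (Finset.mem_univ x)
    _ = 1 := hz_sum s
  have hz_le_sqrt : ∀ s x, z s x ≤ Real.sqrt (z s x) := by
    intro s x
    have h1 : Real.sqrt (z s x) ≤ 1 := by
      rw [show (1:ℝ) = Real.sqrt 1 by simp]
      exact Real.sqrt_le_sqrt (hz_le_one s x)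
    calc z s x = Real.sqrt (z s x) * Real.sqrt (z s x) :=
          (Real.mul_self_sqrt (hz_nonneg s x)).symm
    _ ≤ Real.sqrt (z s x) * 1 :=
          mul_le_mul_of_nonneg_left h1 (Real.sqrt_nonneg _)
    _ = Real.sqrt (z s x) := mul_one _
  have hm_le_q : ∀ x, m x ≤ q x := by
    intro x
    rw [hm]
    exact Finset.sum_le_sum fun r _ =>
      mul_le_mul_of_nonneg_left (hz_le_sqrt r x) (hp_nonneg r)
  have hm_pos_of : ∀ s x, 0 < z s x → 0 < m x := by
    intro s x hzx
    rw [hm]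
    exact lt_of_lt_of_le (mul_pos (hp_pos s) hzx)
      (Finset.single_le_sum (fun r _ => mul_nonneg (hp_nonneg r) (hz_nonneg r x))
        (Finset.mem_univ s))
  have hq_ge : ∀ s x, p s * Real.sqrt (z s x) ≤ q x := by
    intro s x
    exact Finset.single_le_sum (f := fun r => p r * Real.sqrt (z r x))
      (fun r _ => mul_nonneg (hp_nonneg r) (Real.sqrt_nonneg _)) (Finset.mem_univ s)
  have hq_pos_of : ∀ s x, 0 < z s x → 0 < q x := by
    intro s x hzx
    exact lt_of_lt_of_le (mul_pos (hp_pos s) (Real.sqrt_pos.mpr hzx)) (hq_ge s x)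
  have hz_zero_of_m : ∀ x, m x = 0 → ∀ s, z s x = 0 := by
    intro x hmx s
    by_contra h
    have : 0 < z s x := lt_of_le_of_ne (hz_nonneg s x) (Ne.symm h)
    exact absurd hmx (ne_of_gt (hm_pos_of s x this))
  have hT_pos : ∀ s, 0 < T s := by
    intro s
    have h1 : p s = ∑ x, Real.sqrt (z s x) * (p s * Real.sqrt (z s x)) := by
      have : ∀ x, Real.sqrt (z s x) * (p s * Real.sqrt (z s x)) = p s * z s x := by
        intro x
        rw [show Real.sqrt (z s x) * (p s * Real.sqrt (z s x))
              = p s * (Real.sqrt (z s x) * Real.sqrt (z s x)) by ring,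
            Real.mul_self_sqrt (hz_nonneg s x)]
      rw [Finset.sum_congr rfl fun x _ => this x, ← Finset.mul_sum, hz_sum, mul_one]
    have h2 : p s ≤ T s := by
      rw [h1, hT_def]
      exact Finset.sum_le_sum fun x _ =>
        mul_le_mul_of_nonneg_left (hq_ge s x) (Real.sqrt_nonneg _)
    exact lt_of_lt_of_le (hp_pos s) h2
  have hT_eq : ∀ s, (∑ r, p r * ∑ x, Real.sqrt (z s x * z r x)) = T s := by
    intro s
    rw [hT_def]
    simp only [hq_def]
    have h1 : ∀ r : Fin C, p r * ∑ x, Real.sqrt (z s x * z r x)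
        = ∑ x, p r * (Real.sqrt (z s x) * Real.sqrt (z r x)) := by
      intro r
      rw [Finset.mul_sum]
      exact Finset.sum_congr rfl fun x _ => by rw [Real.sqrt_mul (hz_nonneg s x)]
    rw [Finset.sum_congr rfl fun r _ => h1 r, Finset.sum_comm]
    exact Finset.sum_congr rfl fun x _ => by
      rw [Finset.mul_sum]
      exact Finset.sum_congr rfl fun r _ => by ring
  -- Gibbs-type bound: the normalized distribution sqrt(z s)·q/T s
  have hGibbs : ∀ s, ∑ x, z s x * Real.log (Real.sqrt (z s x) * q x / (z s x * T s)) ≤ 0 := by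
    intro s
    have h1 : ∀ x, z s x * Real.log (Real.sqrt (z s x) * q x / (z s x * T s))
        ≤ Real.sqrt (z s x) * q x / T s - z s x := by
      intro x
      rcases eq_or_lt_of_le (hz_nonneg s x) with h0 | hpos
      · simp [← h0]
      · have hq' := hq_pos_of s x hpos
        have hs' : 0 < Real.sqrt (z s x) := Real.sqrt_pos.mpr hpos
        have harg : 0 < Real.sqrt (z s x) * q x / (z s x * T s) :=
          div_pos (mul_pos hs' hq') (mul_pos hpos (hT_pos s))
        have hlog := Real.log_le_sub_one_of_pos harg
        have h2 := mul_le_mul_of_nonneg_left hlog hpos.le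
        have heq : z s x * (Real.sqrt (z s x) * q x / (z s x * T s) - 1)
            = Real.sqrt (z s x) * q x / T s - z s x := by
          have hz0 : z s x ≠ 0 := hpos.ne'
          have hT0 : T s ≠ 0 := (hT_pos s).ne'
          field_simp
        linarith
    calc ∑ x, z s x * Real.log (Real.sqrt (z s x) * q x / (z s x * T s))
        ≤ ∑ x, (Real.sqrt (z s x) * q x / T s - z s x) := Finset.sum_le_sum fun x _ => h1 x
      _ = (∑ x, Real.sqrt (z s x) * q x) / T s - ∑ x, z s x := by
          rw [Finset.sum_sub_distrib, Finset.sum_div]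
      _ = 0 := by
          have hTs : (∑ x, Real.sqrt (z s x) * q x) = T s := rfl
          rw [hTs, hz_sum s, div_self (hT_pos s).ne']
          norm_num
  -- pointwise log identity
  have hid : ∀ s x, z s x * Real.log (z s x / m x)
      = -(z s x * Real.log (Real.sqrt (z s x) * q x / (z s x * T s)))
        - z s x * Real.log (T s)
        + z s x * Real.log (Real.sqrt (z s x) * q x / m x) := by
    intro s x
    rcases eq_or_lt_of_le (hz_nonneg s x) with h0 | hpos
    · simp [← h0]
    · have hm' := hm_pos_of s x hpos
      have hq' := hq_pos_of s x hpos
      have hs' : 0 < Real.sqrt (z s x) := Real.sqrt_pos.mpr hpos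
      rw [Real.log_div hpos.ne' hm'.ne',
          Real.log_div (mul_pos hs' hq').ne' (mul_pos hpos (hT_pos s)).ne',
          Real.log_div (mul_pos hs' hq').ne' hm'.ne',
          Real.log_mul hs'.ne' hq'.ne', Real.log_mul hpos.ne' (hT_pos s).ne']
      ring
  -- per-s lower bound
  have hDs : ∀ s, (∑ x, z s x * Real.log (Real.sqrt (z s x) * q x / m x)) - Real.log (T s)
      ≤ ∑ x, z s x * Real.log (z s x / m x) := by
    intro s
    have hsum : ∑ x, z s x * Real.log (z s x / m x)
        = -(∑ x, z s x * Real.log (Real.sqrt (z s x) * q x / (z s x * T s)))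
          - Real.log (T s)
          + ∑ x, z s x * Real.log (Real.sqrt (z s x) * q x / m x) := by
      rw [Finset.sum_congr rfl fun x _ => hid s x, Finset.sum_add_distrib,
          Finset.sum_sub_distrib, Finset.sum_neg_distrib, ← Finset.sum_mul, hz_sum, one_mul]
    linarith [hGibbs s]
  -- the correction term is nonnegative in total
  have hDpos : 0 ≤ ∑ s, p s * ∑ x, z s x * Real.log (Real.sqrt (z s x) * q x / m x) := by
    have hswap : ∑ s, p s * ∑ x, z s x * Real.log (Real.sqrt (z s x) * q x / m x)
        = ∑ x, ∑ s, p s * (z s x * Real.log (Real.sqrt (z s x) * q x / m x)) := by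
      simp_rw [Finset.mul_sum]
      exact Finset.sum_comm
    rw [hswap]
    apply Finset.sum_nonneg
    intro x _
    rcases eq_or_lt_of_le (hm_nonneg x) with hm0 | hmpos
    · have hz0 := hz_zero_of_m x hm0.symm
      simp [hz0]
    · have hq' : 0 < q x := lt_of_lt_of_le hmpos (hm_le_q x)
      have h1 : ∀ s, p s * (z s x - Real.sqrt (z s x) * (m x / q x))
          ≤ p s * (z s x * Real.log (Real.sqrt (z s x) * q x / m x)) := by
        intro s
        apply mul_le_mul_of_nonneg_left _ (hp_nonneg s)
        rcases eq_or_lt_of_le (hz_nonneg s x) with h0 | hpos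
        · simp [← h0]
        · have hs' : 0 < Real.sqrt (z s x) := Real.sqrt_pos.mpr hpos
          have harg : 0 < Real.sqrt (z s x) * q x / m x := div_pos (mul_pos hs' hq') hmpos
          have hinv := Real.log_le_sub_one_of_pos (inv_pos.mpr harg)
          rw [Real.log_inv] at hinv
          have hlog : 1 - (Real.sqrt (z s x) * q x / m x)⁻¹
              ≤ Real.log (Real.sqrt (z s x) * q x / m x) := by linarith
          have h2 := mul_le_mul_of_nonneg_left hlog hpos.le
          have heq : z s x * (1 - (Real.sqrt (z s x) * q x / m x)⁻¹)
              = z s x - Real.sqrt (z s x) * (m x / q x) := by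
            have hz0 : z s x ≠ 0 := hpos.ne'
            have hm0 : m x ≠ 0 := hmpos.ne'
            have hq0 : q x ≠ 0 := hq'.ne'
            have hs0 : Real.sqrt (z s x) ≠ 0 := hs'.ne'
            field_simp
            linear_combination m x * Real.mul_self_sqrt (hz_nonneg s x)
          linarith
      have h2 : ∑ s, p s * (z s x - Real.sqrt (z s x) * (m x / q x)) = 0 := by
        have e0 : ∀ s : Fin C, p s * (z s x - Real.sqrt (z s x) * (m x / q x))
            = p s * z s x - p s * Real.sqrt (z s x) * (m x / q x) := fun s => by ring
        rw [Finset.sum_congr rfl fun s _ => e0 s, Finset.sum_sub_distrib]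
        have e1 : ∑ s, p s * z s x = m x := (hm x).symm
        have e2 : ∑ s, p s * Real.sqrt (z s x) * (m x / q x) = q x * (m x / q x) := by
          rw [← Finset.sum_mul]
        have e3 : q x * (m x / q x) = m x := by
          field_simp
        rw [e1, e2, e3, sub_self]
      calc (0:ℝ) = ∑ s, p s * (z s x - Real.sqrt (z s x) * (m x / q x)) := h2.symm
        _ ≤ ∑ s, p s * (z s x * Real.log (Real.sqrt (z s x) * q x / m x)) :=
            Finset.sum_le_sum fun s _ => h1 s
  -- assemble
  have hTrw : (∑ s, p s * Real.log (∑ r, p r * ∑ x, Real.sqrt (z s x * z r x)))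
      = ∑ s, p s * Real.log (T s) :=
    Finset.sum_congr rfl fun s _ => by rw [hT_eq s]
  rw [hMI, ge_iff_le, hTrw]
  calc -∑ s, p s * Real.log (T s)
      = 0 - ∑ s, p s * Real.log (T s) := by ring
    _ ≤ (∑ s, p s * ∑ x, z s x * Real.log (Real.sqrt (z s x) * q x / m x))
        - ∑ s, p s * Real.log (T s) := by linarith
    _ = ∑ s, p s * ((∑ x, z s x * Real.log (Real.sqrt (z s x) * q x / m x)) - Real.log (T s)) := by
        simp_rw [mul_sub]
        rw [Finset.sum_sub_distrib]
    _ ≤ ∑ s, p s * ∑ x, z s x * Real.log (z s x / m x) :=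
        Finset.sum_le_sum fun s _ => mul_le_mul_of_nonneg_left (hDs s) (hp_nonneg s)
    _ = ∑ s, ∑ x, p s * z s x * Real.log (z s x / m x) := by
        refine Finset.sum_congr rfl fun s _ => ?_
        rw [Finset.mul_sum]
        exact Finset.sum_congr rfl fun x _ => by ring
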